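/- Let X be a topological space, Y ⊆ X, and suppose 𝒜 is a family of open subsets of X covering X. If the Krull (topological) dimension of Y is at least n, then there exists U ∈ 𝒜 with dim(U ∩ Y) ≥ n. -/

import Mathlib

open TopologicalSpace Set Topology Order

lemma exists_ltSeries_of_le_krullDim' {α : Type*} [Preorder α] (n : ℕ)
    (h : (n : WithBot ℕ∞) ≤ Order.krullDim α) : ∃ p : LTSeries α, n ≤ p.length := by
  by_contra hc
  push_neg at hc
  have hne : Nonempty α := by
    by_contra he
    rw [not_nonempty_iff] at he
    rw [Order.krullDim_eq_bot] at h
    simp at h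
  obtain ⟨a⟩ := hne
  have h0 : 0 < n := hc (RelSeries.singleton _ a)
  have hub : Order.krullDim α ≤ ((n - 1 : ℕ) : WithBot ℕ∞) := by
    rw [Order.krullDim]
    apply iSup_le
    intro p
    have := hc p
    exact_mod_cast Nat.le_sub_one_of_lt this
  have := h.trans hub
  have : n ≤ n - 1 := by exact_mod_cast this
  omega

/-- If a family `𝒜` of open sets covers `X` and a subset `Y ⊆ X` has
topological (Krull) dimension at least `n`, then `dim (U ∩ Y) ≥ n` for some
`U ∈ 𝒜`. -/
theorem exists_open_of_le_topologicalKrullDim {X : Type*} [TopologicalSpace X]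
    (Y : Set X) (𝒜 : Set (Set X)) (hopen : ∀ U ∈ 𝒜, IsOpen U)
    (hcover : ⋃₀ 𝒜 = Set.univ) (n : ℕ) (hY : (n : WithBot ℕ∞) ≤ topologicalKrullDim Y) :
    ∃ U ∈ 𝒜, (n : WithBot ℕ∞) ≤ topologicalKrullDim ↥(U ∩ Y) := by
  obtain ⟨p, hp⟩ := exists_ltSeries_of_le_krullDim' n hY
  obtain ⟨x, hx⟩ := (p.head).isIrreducible'.1
  obtain ⟨U, hU𝒜, hxU⟩ : ∃ U ∈ 𝒜, (x : X) ∈ U := by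
    have : (x : X) ∈ ⋃₀ 𝒜 := hcover ▸ Set.mem_univ _
    simpa using this
  refine ⟨U, hU𝒜, ?_⟩
  set ι : ↥(U ∩ Y) → ↥Y := Set.inclusion Set.inter_subset_right with hιdef
  have hι : IsOpenEmbedding ι := by
    refine ⟨Topology.IsEmbedding.inclusion _, ?_⟩
    rw [hιdef, Set.range_inclusion]
    have he : {z : ↥Y | (z : X) ∈ U ∩ Y} = Subtype.val ⁻¹' U := by
      ext z; simp [z.2]
    rw [he]
    exact (hopen U hU𝒜).preimage continuous_subtype_val
  have hxmem : ∀ i, x ∈ ((p i) : Set ↥Y) := fun i => p.monotone (Fin.zero_le i) hx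
  have hxUY : (x : X) ∈ U ∩ Y := ⟨hxU, x.2⟩
  set x' : ↥(U ∩ Y) := ⟨(x : X), hxUY⟩ with hx'def
  have hιx' : ι x' = x := rfl
  set f : Fin (p.length + 1) → IrreducibleCloseds ↥(U ∩ Y) := fun i =>
    { carrier := ι ⁻¹' ((p i) : Set ↥Y)
      isIrreducible' := ⟨⟨x', show ι x' ∈ ((p i) : Set ↥Y) by rw [hιx']; exact hxmem i⟩,
        (p i).isIrreducible'.2.preimage hι⟩
      isClosed' := (p i).isClosed'.preimage hι.continuous } with hfdef
  have key : ∀ i j : Fin (p.length + 1), p i < p j → f i < f j := by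
    intro i j hij
    refine lt_of_le_of_ne (fun z hz => hij.le hz) ?_
    intro heq
    have hV : IsOpen (Set.range ι) := hι.isOpen_range
    have hmeet : (((p j) : Set ↥Y) ∩ Set.range ι).Nonempty :=
      ⟨x, hxmem j, ⟨x', hιx'⟩⟩
    have hdense : ((p j) : Set ↥Y) ⊆ closure (((p j) : Set ↥Y) ∩ Set.range ι) :=
      subset_closure_inter_of_isPreirreducible_of_isOpen (p j).isIrreducible'.2 hV hmeet
    have himg : ∀ k : Fin (p.length + 1),
        ι '' ((f k : Set ↥(U ∩ Y))) = ((p k) : Set ↥Y) ∩ Set.range ι := by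
      intro k
      show ι '' (ι ⁻¹' _) = _
      rw [Set.image_preimage_eq_inter_range]
      rfl
    have hsub : ((p j) : Set ↥Y) ∩ Set.range ι ⊆ ((p i) : Set ↥Y) := by
      rw [← himg j, show (f j : Set ↥(U ∩ Y)) = (f i : Set ↥(U ∩ Y)) from
        congrArg _ heq.symm, himg i]
      exact Set.inter_subset_left
    have hle : p j ≤ p i := by
      intro z hz
      have := hdense hz
      have := (IsClosed.closure_subset_iff (p i).isClosed').2 hsub this
      exact this
    exact absurd hij (not_lt_of_ge hle)
  set q : LTSeries (IrreducibleCloseds ↥(U ∩ Y)) :=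
    ⟨p.length, f, fun i => key _ _ (p.step i)⟩ with hqdef
  have hq : (q.length : WithBot ℕ∞) ≤ Order.krullDim (IrreducibleCloseds ↥(U ∩ Y)) :=
    Order.LTSeries.length_le_krullDim q
  refine le_trans ?_ hq
  have : q.length = p.length := rfl
  rw [this]
  exact_mod_cast hp
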